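/- arXiv:1105.1734 — 2 statements merged into one kernel-verified Lean document; each statement's English description precedes it below -/
import Mathlib

section
/- The Lie bracket [(S,A,B),(S',A',B')] = ([S,S'], S∘A' - S'∘A, Ω(A(·),A'(·))^{sym}) on sp(V,Ω) × L(W,V) × Sym(W) satisfies the Jacobi identity (it is the Lie algebra of the generalized Jacobi group Jac(V,Ω;W)). -/
/-- Membership in the symplectic Lie algebra: `Ω(Su, v) + Ω(u, Sv) = 0`. -/
def InSp {V : Type*} [AddCommGroup V] [Module ℝ V]
    (Ω : V →ₗ[ℝ] V →ₗ[ℝ] ℝ) (S : V →ₗ[ℝ] V) : Prop :=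
  ∀ u v : V, Ω (S u) v + Ω u (S v) = 0

/-- The symmetrized form `Ω(A(·),A'(·))^sym(w₁,w₂) = ½(Ω(A w₁, A' w₂) + Ω(A w₂, A' w₁))`. -/
noncomputable def OmSym {V W : Type*} [AddCommGroup V] [Module ℝ V]
    [AddCommGroup W] [Module ℝ W] (Ω : V →ₗ[ℝ] V →ₗ[ℝ] ℝ) (A A' : W →ₗ[ℝ] V) :
    W →ₗ[ℝ] W →ₗ[ℝ] ℝ :=
  LinearMap.mk₂ ℝ (fun w₁ w₂ => (1 / 2 : ℝ) * (Ω (A w₁) (A' w₂) + Ω (A w₂) (A' w₁)))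
    (by intros; simp [map_add, LinearMap.add_apply]; ring)
    (by intros; simp [map_smul, LinearMap.smul_apply, smul_eq_mul]; ring)
    (by intros; simp [map_add, LinearMap.add_apply]; ring)
    (by intros; simp [map_smul, LinearMap.smul_apply, smul_eq_mul]; ring)

/-- The bracket of the generalized Jacobi Lie algebra on
`sp(V,Ω) × L(W,V) × Sym(W)`:
`[(S,A,B),(S',A',B')] = ([S,S'], S∘A' - S'∘A, Ω(A(·),A'(·))^sym)`. -/
noncomputable def genJacBracket {V W : Type*} [AddCommGroup V] [Module ℝ V]
    [AddCommGroup W] [Module ℝ W] (Ω : V →ₗ[ℝ] V →ₗ[ℝ] ℝ)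
    (x y : (V →ₗ[ℝ] V) × (W →ₗ[ℝ] V) × (W →ₗ[ℝ] W →ₗ[ℝ] ℝ)) :
    (V →ₗ[ℝ] V) × (W →ₗ[ℝ] V) × (W →ₗ[ℝ] W →ₗ[ℝ] ℝ) :=
  (x.1 ∘ₗ y.1 - y.1 ∘ₗ x.1, (x.1 ∘ₗ y.2.1 - y.1 ∘ₗ x.2.1, OmSym Ω x.2.1 y.2.1))

/-- The Lie bracket `[(S,A,B),(S',A',B')] = ([S,S'], S∘A' - S'∘A, Ω(A(·),A'(·))^sym)` of
the generalized Jacobi group satisfies the Jacobi identity. -/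
theorem generalized_jacobi_bracket_jacobi_identity (V W : Type*)
    [AddCommGroup V] [Module ℝ V] [AddCommGroup W] [Module ℝ W]
    [FiniteDimensional ℝ W]
    (Ω : V →ₗ[ℝ] V →ₗ[ℝ] ℝ) (hskew : ∀ u v : V, Ω u v = -Ω v u) :
    ∀ x y z : (V →ₗ[ℝ] V) × (W →ₗ[ℝ] V) × (W →ₗ[ℝ] W →ₗ[ℝ] ℝ),
      InSp Ω x.1 → InSp Ω y.1 → InSp Ω z.1 →
      genJacBracket Ω (genJacBracket Ω x y) z + genJacBracket Ω (genJacBracket Ω y z) x +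
        genJacBracket Ω (genJacBracket Ω z x) y = 0 := by
  intro x y z hx hy hz
  obtain ⟨S, A, B⟩ := x
  obtain ⟨S', A', B'⟩ := y
  obtain ⟨S'', A'', B''⟩ := z
  have ΦS : ∀ u v, Ω (S u) v = Ω (S v) u := fun u v => by
    have h1 := hx u v; have h2 := hskew u (S v); linarith
  have ΦS' : ∀ u v, Ω (S' u) v = Ω (S' v) u := fun u v => by
    have h1 := hy u v; have h2 := hskew u (S' v); linarith
  have ΦS'' : ∀ u v, Ω (S'' u) v = Ω (S'' v) u := fun u v => by
    have h1 := hz u v; have h2 := hskew u (S'' v); linarith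
  refine Prod.ext ?_ (Prod.ext ?_ ?_)
  · ext v
    simp only [genJacBracket, Prod.fst_add, LinearMap.add_apply, LinearMap.sub_apply,
      LinearMap.comp_apply, map_sub, Prod.fst_zero, LinearMap.zero_apply]
    abel
  · ext w
    simp only [genJacBracket, Prod.snd_add, Prod.fst_add, LinearMap.add_apply,
      LinearMap.sub_apply, LinearMap.comp_apply, map_sub, Prod.snd_zero, Prod.fst_zero,
      LinearMap.zero_apply]
    abel
  · ext w1 w2
    simp only [genJacBracket, OmSym, Prod.snd_add, LinearMap.add_apply, LinearMap.mk₂_apply,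
      LinearMap.sub_apply, LinearMap.comp_apply, map_sub, Prod.snd_zero,
      LinearMap.zero_apply]
    have e1 := ΦS (A' w1) (A'' w2)
    have e2 := ΦS (A' w2) (A'' w1)
    have e3 := ΦS' (A'' w1) (A w2)
    have e4 := ΦS' (A'' w2) (A w1)
    have e5 := ΦS'' (A w1) (A' w2)
    have e6 := ΦS'' (A w2) (A' w1)
    linarith
end

section
/- Let (V,Ω) be symplectic with W = ker of a degenerate antisymmetric form on V ⊕ W. The map Γ(σ,α,β) := (B^♯∘σ, B^♯∘α*, β) is a Lie algebra isomorphism from (Sym(V) ⋉ L(V,W*)) ×_C Sym(W), with bracket ([σ,σ']_Π, α∘Π^♯∘σ' - α'∘Π^♯∘σ, Π(α*(·),α'*(·))^{sym}), onto the generalized Jacobi Lie algebra jac(V,Ω;W) with bracket ([S,S'], S∘A' - S'∘A, Ω(A(·),A'(·))^{sym}). -/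
/-- The symmetrized Poisson pairing `Π(α*(·),α'*(·))^sym` on `W`, where `Π(β,γ) = β(P γ)`
and `α* = α.flip : W →ₗ V*` is the adjoint of `α : V →ₗ W*`. -/
noncomputable def PiSym {V W : Type*} [AddCommGroup V] [Module ℝ V]
    [AddCommGroup W] [Module ℝ W] (P : (V →ₗ[ℝ] ℝ) →ₗ[ℝ] V)
    (α α' : V →ₗ[ℝ] W →ₗ[ℝ] ℝ) : W →ₗ[ℝ] W →ₗ[ℝ] ℝ :=
  LinearMap.mk₂ ℝ
    (fun w₁ w₂ => (1 / 2 : ℝ) *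
      ((α.flip w₁) (P (α'.flip w₂)) + (α.flip w₂) (P (α'.flip w₁))))
    (by intros; simp [map_add, LinearMap.add_apply]; ring)
    (by intros; simp [map_smul, LinearMap.smul_apply, smul_eq_mul]; ring)
    (by intros; simp [map_add, LinearMap.add_apply]; ring)
    (by intros; simp [map_smul, LinearMap.smul_apply, smul_eq_mul]; ring)

/-- The bracket of `(Sym(V) ⋉ L(V,W*)) ×_C Sym(W)`:
`[(σ,α,β),(σ',α',β')] = ([σ,σ']_Π, α∘P∘σ' - α'∘P∘σ, Π(α*(·),α'*(·))^sym)`. -/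
noncomputable def srcBracketW {V W : Type*} [AddCommGroup V] [Module ℝ V]
    [AddCommGroup W] [Module ℝ W] (P : (V →ₗ[ℝ] ℝ) →ₗ[ℝ] V)
    (x y : (V →ₗ[ℝ] V →ₗ[ℝ] ℝ) × (V →ₗ[ℝ] W →ₗ[ℝ] ℝ) × (W →ₗ[ℝ] W →ₗ[ℝ] ℝ)) :
    (V →ₗ[ℝ] V →ₗ[ℝ] ℝ) × (V →ₗ[ℝ] W →ₗ[ℝ] ℝ) × (W →ₗ[ℝ] W →ₗ[ℝ] ℝ) :=
  (x.1 ∘ₗ (P ∘ₗ y.1) - y.1 ∘ₗ (P ∘ₗ x.1),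
    (x.2.1 ∘ₗ (P ∘ₗ y.1) - y.2.1 ∘ₗ (P ∘ₗ x.1), PiSym P x.2.1 y.2.1))

/-- The map `Γ(σ,α,β) = (B^♯∘σ, B^♯∘α*, β)`, with `B^♯ = P = Π^♯`. -/
noncomputable def GammaGen {V W : Type*} [AddCommGroup V] [Module ℝ V]
    [AddCommGroup W] [Module ℝ W] (P : (V →ₗ[ℝ] ℝ) →ₗ[ℝ] V)
    (x : (V →ₗ[ℝ] V →ₗ[ℝ] ℝ) × (V →ₗ[ℝ] W →ₗ[ℝ] ℝ) × (W →ₗ[ℝ] W →ₗ[ℝ] ℝ)) :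
    (V →ₗ[ℝ] V) × (W →ₗ[ℝ] V) × (W →ₗ[ℝ] W →ₗ[ℝ] ℝ) :=
  (P ∘ₗ x.1, (P ∘ₗ x.2.1.flip, x.2.2))

/-- Let `(V,Ω)` be symplectic with `P = Π^♯ = B^♯` the inverse of `Ω^♭`.  The map
`Γ(σ,α,β) = (B^♯∘σ, B^♯∘α*, β)` is a Lie algebra isomorphism from
`(Sym(V) ⋉ L(V,W*)) ×_C Sym(W)`, with bracket
`([σ,σ']_Π, α∘Π^♯∘σ' - α'∘Π^♯∘σ, Π(α*(·),α'*(·))^sym)`, onto the generalized Jacobi Lie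
algebra `jac(V,Ω;W)` with bracket `([S,S'], S∘A' - S'∘A, Ω(A(·),A'(·))^sym)`: it maps
symmetric `σ` into `sp(V,Ω)`, takes brackets to brackets, and is a bijection onto the
triples `(S,A,B)` with `S ∈ sp(V,Ω)` and `B` symmetric. -/
theorem gamma_generalized_jacobi_iso (V W : Type*) [AddCommGroup V] [Module ℝ V]
    [AddCommGroup W] [Module ℝ W]
    (Ω : V →ₗ[ℝ] V →ₗ[ℝ] ℝ) (hskew : ∀ u v : V, Ω u v = -Ω v u)
    (P : (V →ₗ[ℝ] ℝ) →ₗ[ℝ] V)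
    (hP₁ : ∀ (β : V →ₗ[ℝ] ℝ) (v : V), Ω (P β) v = β v)
    (hP₂ : ∀ u : V, P (Ω u) = u) :
    (∀ x : (V →ₗ[ℝ] V →ₗ[ℝ] ℝ) × (V →ₗ[ℝ] W →ₗ[ℝ] ℝ) × (W →ₗ[ℝ] W →ₗ[ℝ] ℝ),
      (∀ u v : V, x.1 u v = x.1 v u) → InSp Ω (GammaGen P x).1) ∧
    (∀ x y : (V →ₗ[ℝ] V →ₗ[ℝ] ℝ) × (V →ₗ[ℝ] W →ₗ[ℝ] ℝ) × (W →ₗ[ℝ] W →ₗ[ℝ] ℝ),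
      (∀ u v : V, x.1 u v = x.1 v u) → (∀ u v : V, y.1 u v = y.1 v u) →
      GammaGen P (srcBracketW P x y) =
        genJacBracket Ω (GammaGen P x) (GammaGen P y)) ∧
    (∀ x y : (V →ₗ[ℝ] V →ₗ[ℝ] ℝ) × (V →ₗ[ℝ] W →ₗ[ℝ] ℝ) × (W →ₗ[ℝ] W →ₗ[ℝ] ℝ),
      GammaGen P x = GammaGen P y → x = y) ∧
    (∀ z : (V →ₗ[ℝ] V) × (W →ₗ[ℝ] V) × (W →ₗ[ℝ] W →ₗ[ℝ] ℝ),
      InSp Ω z.1 → (∀ w₁ w₂ : W, z.2.2 w₁ w₂ = z.2.2 w₂ w₁) →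
      ∃ x : (V →ₗ[ℝ] V →ₗ[ℝ] ℝ) × (V →ₗ[ℝ] W →ₗ[ℝ] ℝ) × (W →ₗ[ℝ] W →ₗ[ℝ] ℝ),
        (∀ u v : V, x.1 u v = x.1 v u) ∧
        (∀ w₁ w₂ : W, x.2.2 w₁ w₂ = x.2.2 w₂ w₁) ∧ GammaGen P x = z) := by
  have hinj : ∀ β γ : V →ₗ[ℝ] ℝ, P β = P γ → β = γ := by
    intro β γ h
    ext v
    rw [← hP₁ β v, ← hP₁ γ v, h]
  refine ⟨?_, ?_, ?_, ?_⟩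
  · intro x hx u v
    simp only [GammaGen, LinearMap.comp_apply]
    rw [hP₁, hskew u (P (x.1 v)), hP₁, hx u v]
    ring
  · intro x y hx hy
    have key : ∀ (σ : V →ₗ[ℝ] V →ₗ[ℝ] ℝ) (α : V →ₗ[ℝ] W →ₗ[ℝ] ℝ)
        (hσ : ∀ u v : V, σ u v = σ v u) (w : W) (v : V),
        σ (P (α.flip w)) v = -(α (P (σ v))) w := by
      intro σ α hσ w v
      rw [hσ (P (α.flip w)) v, ← hP₁ (σ v) (P (α.flip w)),
        hskew (P (σ v)) (P (α.flip w)), hP₁]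
      simp
    refine Prod.ext ?_ (Prod.ext ?_ ?_)
    · ext v
      simp [GammaGen, genJacBracket, srcBracketW, LinearMap.sub_apply,
        LinearMap.comp_apply, map_sub]
    · ext w
      simp only [GammaGen, genJacBracket, srcBracketW, LinearMap.sub_apply,
        LinearMap.comp_apply]
      have h0 : ((x.2.1 ∘ₗ (P ∘ₗ y.1) - y.2.1 ∘ₗ (P ∘ₗ x.1)).flip w : V →ₗ[ℝ] ℝ)
          = x.1 (P (y.2.1.flip w)) - y.1 (P (x.2.1.flip w)) := by
        ext v
        simp only [LinearMap.flip_apply, LinearMap.sub_apply, LinearMap.comp_apply]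
        rw [key x.1 y.2.1 hx w v, key y.1 x.2.1 hy w v]
        ring
      rw [h0, map_sub]
    · ext w₁ w₂
      simp only [GammaGen, genJacBracket, srcBracketW, PiSym, OmSym,
        LinearMap.mk₂_apply, LinearMap.comp_apply, LinearMap.flip_apply]
      rw [hP₁, hP₁]
      simp [LinearMap.flip_apply]
  · intro x y h
    have h1 := congrArg Prod.fst h
    have h2 := congrArg (fun z => z.2.1) h
    have h3 := congrArg (fun z => z.2.2) h
    simp only [GammaGen] at h1 h2 h3
    refine Prod.ext ?_ (Prod.ext ?_ h3)
    · ext v u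
      have := congrArg (fun f => f v) h1
      simp only [LinearMap.comp_apply] at this
      exact congrArg (fun f => f u) (hinj _ _ this)
    · ext v w
      have := congrArg (fun f => f w) h2
      simp only [LinearMap.comp_apply] at this
      have := congrArg (fun f => f v) (hinj _ _ this)
      simpa using this
  · intro z hz hB
    refine ⟨(Ω ∘ₗ z.1, ((Ω ∘ₗ z.2.1).flip, z.2.2)), ?_, hB, ?_⟩
    · intro u v
      simp only [LinearMap.comp_apply]
      have := hz u v
      rw [hskew u (z.1 v)] at this
      linarith
    · refine Prod.ext ?_ (Prod.ext ?_ rfl)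
      · ext v
        simp [GammaGen, LinearMap.comp_apply, hP₂]
      · ext w
        simp [GammaGen, LinearMap.comp_apply, hP₂]
end
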